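/- Let B be an n × n random matrix whose entries are independent Bernoulli random variables with mean p, and let ε ∈ (0,1]. Then with probability at least 1 − 2·exp(−εn/4) there exist sets I, J ⊆ {1,...,n} with |I| ≤ εn and |J| ≤ εn such that the matrix B̃ obtained from B by setting every entry with index in I × J to zero has the property that every row and every column of B̃ contains at most 21pn + 4·ln ε^{−1} ones. -/

import Mathlib

open MeasureTheory ProbabilityTheory Finset
open scoped ENNReal NNReal Nat

lemma geom_aux {q : ℝ} (h0 : 0 ≤ q) (h1 : q < 1) (N : ℕ) :
    ∑ j ∈ range N, q ^ j ≤ 1 / (1 - q) := by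
  have h1' : (0:ℝ) < 1 - q := by linarith
  have hqn : 0 ≤ q ^ N := pow_nonneg h0 N
  calc ∑ j ∈ range N, q ^ j = (q ^ N - 1) / (q - 1) := geom_sum_eq (ne_of_lt h1) N
    _ = (1 - q ^ N) / (1 - q) := by
        rw [div_eq_div_iff (by linarith) (by linarith)]; ring
    _ ≤ 1 / (1 - q) := by gcongr; linarith

lemma pow_div_factorial_le_exp (x : ℝ) (hx : 0 ≤ x) (k : ℕ) :
    x ^ k / k ! ≤ Real.exp x := by
  have := Real.sum_le_exp_of_nonneg hx (k+1)
  refine le_trans ?_ this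
  have : ∀ i ∈ range (k+1), (0:ℝ) ≤ x ^ i / i ! := by
    intro i _
    positivity
  calc x ^ k / k ! ≤ ∑ i ∈ range (k+1), x ^ i / i ! :=
        single_le_sum this (self_mem_range_succ k)
    _ = _ := rfl

set_option maxHeartbeats 2000000 in
lemma key_numeric (n : ℕ) (p ε : ℝ) (hp0 : 0 ≤ p) (hε0 : 0 < ε) (hε1 : ε ≤ 1) :
    ∑ k ∈ Finset.Icc (⌊21*p*n + 4*Real.log ε⁻¹⌋₊ + 1) n,
      Real.exp k * (n.choose k) * p ^ k ≤ ε / 4 := by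
  have hL : 0 ≤ Real.log ε⁻¹ := Real.log_nonneg ((one_le_inv₀ hε0).2 hε1)
  obtain ⟨m, hm⟩ : ∃ x : ℝ, 21*p*n + 4*Real.log ε⁻¹ = x := ⟨_, rfl⟩
  rw [hm]
  have hpn : 0 ≤ 21*p*(n:ℝ) := by positivity
  have hm0 : 0 ≤ m := by rw [← hm]; positivity
  obtain ⟨k₀, hk₀⟩ : ∃ k : ℕ, ⌊m⌋₊ + 1 = k := ⟨_, rfl⟩
  rw [hk₀]
  have hmk : m < (k₀:ℝ) := by rw [← hk₀]; exact_mod_cast Nat.lt_floor_add_one m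
  have hk₀1 : 1 ≤ k₀ := by omega
  obtain ⟨q, hq⟩ : ∃ x : ℝ, Real.exp 1 / 21 = x := ⟨_, rfl⟩
  have hexp1 : Real.exp 1 < 2.7182818286 := Real.exp_one_lt_d9
  have hexp1' : 0 < Real.exp 1 := Real.exp_pos 1
  have hq0 : 0 < q := by rw [← hq]; positivity
  have hq1 : q < 0.12945 := by
    rw [← hq, div_lt_iff₀ (by norm_num : (0:ℝ) < 21)]; nlinarith
  obtain ⟨β, hβ⟩ : ∃ x : ℝ, Real.exp 1 * (n * p) = x := ⟨_, rfl⟩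
  have hβ0 : 0 ≤ β := by rw [← hβ]; positivity
  have hβm : β ≤ q * m := by
    rw [← hβ, ← hq]
    rw [div_mul_eq_mul_div, le_div_iff₀ (by norm_num : (0:ℝ) < 21)]
    have h21 : 21 * p * n ≤ m := by rw [← hm]; linarith
    nlinarith
  have hβk : β ≤ q * k₀ := hβm.trans (by nlinarith)
  -- termwise bound
  have hterm : ∀ k ∈ Finset.Icc k₀ n, Real.exp k * (n.choose k) * p ^ k ≤ β ^ k / k ! := by
    intro k hk
    have hch : (n.choose k : ℝ) ≤ (n:ℝ) ^ k / k ! := Nat.choose_le_pow_div k n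
    have hβe : β = Real.exp 1 * (n * p) := hβ.symm
    have hek : Real.exp (k:ℝ) = Real.exp 1 ^ k := by
      rw [← Real.exp_nat_mul]; norm_num
    have hpk : (0:ℝ) ≤ p ^ k := pow_nonneg hp0 k
    have hfk : (0:ℝ) < k ! := by exact_mod_cast k.factorial_pos
    calc Real.exp k * (n.choose k) * p ^ k ≤ Real.exp 1 ^ k * ((n:ℝ)^k / k !) * p ^ k := by
          apply mul_le_mul_of_nonneg_right _ hpk
          rw [hek]
          exact mul_le_mul_of_nonneg_left hch (pow_nonneg hexp1'.le k)
      _ = β ^ k / k ! := by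
          rw [hβe, mul_pow, mul_pow]
          ring
  -- geometric decay
  have hgeo : ∀ k, k₀ ≤ k → β ^ k / k ! ≤ β ^ k₀ / k₀ ! * q ^ (k - k₀) := by
    intro k hk
    induction k, hk using Nat.le_induction with
    | base => simp
    | succ k hk IH =>
      have hfk : (0:ℝ) < k ! := by exact_mod_cast k.factorial_pos
      have h1 : β ^ (k+1) / (k+1)! = (β ^ k / k !) * (β / (k+1)) := by
        rw [Nat.factorial_succ]
        push_cast
        field_simp
        ring
      have h2 : β / (k+1) ≤ q := by
        rw [div_le_iff₀ (by positivity)]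
        calc β ≤ q * k₀ := hβk
          _ ≤ q * (k+1) := by
              have : (k₀:ℝ) ≤ (k:ℝ)+1 := by exact_mod_cast Nat.le_succ_of_le hk
              nlinarith
      rw [h1]
      calc (β ^ k / k !) * (β / (k+1)) ≤ (β ^ k₀ / k₀ ! * q ^ (k - k₀)) * q := by
            apply mul_le_mul IH h2 (by positivity) (by positivity)
        _ = β ^ k₀ / k₀ ! * q ^ (k + 1 - k₀) := by
            rw [mul_assoc, ← pow_succ]
            congr 2
            omega
  have hsum1 : ∑ k ∈ Finset.Icc k₀ n, Real.exp k * (n.choose k) * p ^ k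
      ≤ β ^ k₀ / k₀ ! * ∑ k ∈ Finset.Icc k₀ n, q ^ (k - k₀) := by
    rw [Finset.mul_sum]
    apply Finset.sum_le_sum
    intro k hk
    exact (hterm k hk).trans (hgeo k (Finset.mem_Icc.1 hk).1)
  have hsum2 : ∑ k ∈ Finset.Icc k₀ n, q ^ (k - k₀) ≤ 1 / (1 - q) := by
    have : Finset.Icc k₀ n = Finset.Ico k₀ (n+1) := by
      rw [Finset.Ico_add_one_right_eq_Icc]
    rw [this, Finset.sum_Ico_eq_sum_range]
    calc ∑ j ∈ range (n + 1 - k₀), q ^ (k₀ + j - k₀) = ∑ j ∈ range (n + 1 - k₀), q ^ j := by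
          apply Finset.sum_congr rfl; intro j _; congr 1; omega
      _ ≤ 1 / (1-q) := geom_aux hq0.le (by linarith) _
  have hexpq : Real.exp (1/4) ≤ 1.2842 := by
    have h4 : Real.exp (1/4) ^ (4:ℕ) = Real.exp 1 := by
      rw [← Real.exp_nat_mul]; norm_num
    have : Real.exp (1/4) ^ (4:ℕ) ≤ (1.2842:ℝ) ^ (4:ℕ) := by
      rw [h4]; nlinarith
    exact le_of_pow_le_pow_left₀ (by norm_num) (by norm_num) this
  have hexpm : Real.exp (-(m/4)) ≤ ε := by
    have h4 : Real.log ε⁻¹ ≤ m / 4 := by rw [← hm]; linarith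
    have h5 : -(m/4) ≤ Real.log ε := by
      rw [Real.log_inv] at h4; linarith
    calc Real.exp (-(m/4)) ≤ Real.exp (Real.log ε) := Real.exp_le_exp.2 h5
      _ = ε := Real.exp_log hε0
  have hmain : β ^ k₀ / k₀ ! * (1 / (1 - q)) ≤ ε / 4 := by
    have h1q : (0:ℝ) < 1 - q := by linarith
    have hstep : β ^ k₀ / k₀ ! * (1 / (1 - q)) ≤ Real.exp (-(m/4)) / 4 := by
      rw [mul_one_div, div_le_div_iff₀ h1q (by norm_num : (0:ℝ) < 4)]
      -- goal : β ^ k₀ / k₀ ! * 4 ≤ exp (-(m/4)) * (1-q)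
      have hek : Real.exp (-((k₀:ℝ)/4)) ≤ Real.exp (-(m/4)) := by
        apply Real.exp_le_exp.2; linarith
      rcases Nat.lt_or_ge k₀ 2 with h2 | h2
      · have hk1 : k₀ = 1 := by omega
        have hm1 : m ≤ 1 := by
          have h := hmk; rw [hk1] at h; push_cast at h; linarith
        have hβq : β ≤ q := by
          calc β ≤ q * m := hβm
            _ ≤ q := by nlinarith
        have he14 : (1.2842:ℝ)⁻¹ ≤ Real.exp (-(m/4)) := by
          calc (1.2842:ℝ)⁻¹ ≤ (Real.exp (1/4))⁻¹ := by
                apply inv_anti₀ (Real.exp_pos _) hexpq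
            _ = Real.exp (-(1/4)) := by rw [Real.exp_neg]
            _ ≤ Real.exp (-(m/4)) := by apply Real.exp_le_exp.2; linarith
        rw [hk1]
        simp only [pow_one, Nat.factorial_one, Nat.cast_one, div_one]
        have hinv : (0.778:ℝ) ≤ (1.2842:ℝ)⁻¹ := by norm_num
        have hprod : (0.778:ℝ)*(1-q) ≤ Real.exp (-(m/4))*(1-q) :=
          mul_le_mul_of_nonneg_right (le_trans hinv he14) (le_of_lt h1q)
        linarith
      · -- k₀ ≥ 2
        have h1' : β ^ k₀ / k₀ ! ≤ q ^ k₀ * Real.exp k₀ := by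
          have hfac : (0:ℝ) < k₀ ! := by exact_mod_cast k₀.factorial_pos
          calc β ^ k₀ / k₀ ! ≤ (q * k₀) ^ k₀ / k₀ ! :=
                (div_le_div_iff_of_pos_right hfac).2 (pow_le_pow_left₀ hβ0 hβk k₀)
            _ = q ^ k₀ * ((k₀:ℝ) ^ k₀ / k₀ !) := by rw [mul_pow]; ring
            _ ≤ q ^ k₀ * Real.exp k₀ := by
                have h := pow_div_factorial_le_exp (k₀:ℝ) (by positivity) k₀
                exact mul_le_mul_of_nonneg_left h (le_of_lt (pow_pos hq0 k₀))
        set r : ℝ := q * (Real.exp 1 * Real.exp (1/4)) with hrdef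
        have hr0 : 0 ≤ r := by positivity
        have hA : Real.exp 1 * Real.exp (1/4) ≤ 2.7182818286 * 1.2842 :=
          mul_le_mul hexp1.le hexpq (Real.exp_pos _).le (by norm_num)
        have hrb : r ≤ 0.452 := by
          rw [hrdef]
          calc q * (Real.exp 1 * Real.exp (1/4)) ≤ 0.12945 * (2.7182818286*1.2842) :=
                mul_le_mul hq1.le hA (by positivity) (by norm_num)
            _ ≤ 0.452 := by norm_num
        have hepos : (0:ℝ) < Real.exp ((k₀:ℝ)/4) := Real.exp_pos _
        have hrk : q ^ k₀ * Real.exp k₀ * Real.exp ((k₀:ℝ)/4) = r ^ k₀ := by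
          have e1 : Real.exp (k₀:ℝ) = Real.exp 1 ^ k₀ := by
            rw [← Real.exp_nat_mul]; norm_num
          have e2 : Real.exp ((k₀:ℝ)/4) = Real.exp (1/4) ^ k₀ := by
            rw [show ((k₀:ℝ)/4) = (k₀:ℝ) * (1/4) by ring, Real.exp_nat_mul]
          rw [hrdef, mul_pow, mul_pow, e1, e2]
          ring
        have hrk2 : r ^ k₀ ≤ r ^ 2 := pow_le_pow_of_le_one hr0 (by linarith) h2
        have hfin : 4 * r ^ k₀ ≤ 1 - q := by
          have h9 : r ^ 2 ≤ (0.452:ℝ)^2 := by nlinarith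
          nlinarith [hrk2]
        have hee : Real.exp (-((k₀:ℝ)/4)) * Real.exp ((k₀:ℝ)/4) = 1 := by
          rw [← Real.exp_add]; simp
        calc β ^ k₀ / k₀ ! * 4 ≤ q ^ k₀ * Real.exp k₀ * 4 := by
              nlinarith
          _ ≤ Real.exp (-((k₀:ℝ)/4)) * (1 - q) := by
              have h6 : q ^ k₀ * Real.exp ↑k₀ * 4 * Real.exp ((k₀:ℝ)/4)
                  ≤ Real.exp (-((k₀:ℝ)/4)) * (1 - q) * Real.exp ((k₀:ℝ)/4) := by
                calc q ^ k₀ * Real.exp ↑k₀ * 4 * Real.exp ((k₀:ℝ)/4)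
                    = 4 * r ^ k₀ := by rw [← hrk]; ring
                  _ ≤ 1 - q := hfin
                  _ = Real.exp (-((k₀:ℝ)/4)) * (1 - q) * Real.exp ((k₀:ℝ)/4) := by
                      rw [mul_comm (Real.exp (-((k₀:ℝ)/4))) (1-q), mul_assoc, hee, mul_one]
              exact le_of_mul_le_mul_right h6 hepos
          _ ≤ Real.exp (-(m/4)) * (1 - q) := mul_le_mul_of_nonneg_right hek h1q.le
    calc β ^ k₀ / k₀ ! * (1 / (1 - q)) ≤ Real.exp (-(m/4)) / 4 := hstep
      _ ≤ ε / 4 := by linarith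
  calc ∑ k ∈ Finset.Icc k₀ n, Real.exp k * (n.choose k) * p ^ k
      ≤ β ^ k₀ / k₀ ! * ∑ k ∈ Finset.Icc k₀ n, q ^ (k - k₀) := hsum1
    _ ≤ β ^ k₀ / k₀ ! * (1 / (1-q)) := by
        apply mul_le_mul_of_nonneg_left hsum2 (by positivity)
    _ ≤ ε / 4 := hmain


set_option maxHeartbeats 2000000 in
lemma tail_bound (n : ℕ) (Ω : Type) [MeasureSpace Ω] [IsProbabilityMeasure (ℙ : Measure Ω)]
    (p : ℝ) (hp0 : 0 ≤ p) (hp1 : p ≤ 1)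
    (X : Fin n → Fin n → Ω → ℝ)
    (hmeas : ∀ i j, Measurable (X i j))
    (hindep : iIndepFun
      (fun q : Fin n × Fin n => fun ω => X q.1 q.2 ω) ℙ)
    (hber : ∀ i j, ℙ {ω | X i j ω = 1} = ENNReal.ofReal p)
    (ε : ℝ) (hε0 : 0 < ε) (hε1 : ε ≤ 1) :
    ℙ {ω | ε*n/2 < ((∑ i, if ⌊21*p*n + 4*Real.log ε⁻¹⌋₊ + 1 ≤
          (univ.filter fun j => X i j ω = 1).card
        then (univ.filter fun j => X i j ω = 1).card else 0 : ℕ) : ℝ)}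
      ≤ ENNReal.ofReal (Real.exp (-(ε*n)/4)) := by
  classical
  set k₀ : ℕ := ⌊21*p*n + 4*Real.log ε⁻¹⌋₊ + 1 with hk₀
  set R : Fin n → Ω → ℕ := fun i ω => (univ.filter fun j => X i j ω = 1).card with hR
  set fexp : ℕ → ℝ≥0∞ := fun k => if k₀ ≤ k then ENNReal.ofReal (Real.exp k) else 1 with hfexp
  -- σ-algebras of rows
  set M : Fin n → MeasurableSpace Ω :=
    fun i => ⨆ j, MeasurableSpace.comap (fun ω => X i j ω) inferInstance with hM
  have hMle : ∀ i, M i ≤ (inferInstance : MeasurableSpace Ω) := by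
    intro i
    apply iSup_le
    intro j
    exact (hmeas i j).comap_le
  have hXM : ∀ i j, Measurable[M i] (fun ω => X i j ω) := by
    intro i j
    exact Measurable.of_comap_le (le_iSup (fun j => MeasurableSpace.comap (fun ω => X i j ω) inferInstance) j)
  have hsetM : ∀ i j, MeasurableSet[M i] {ω | X i j ω = 1} := by
    intro i j
    have := hXM i j (MeasurableSet.singleton (1:ℝ))
    simpa [Set.preimage, Set.mem_singleton_iff] using this
  have hRM : ∀ i, Measurable[M i] (R i) := by
    intro i
    have hRsum : R i = fun ω => ∑ j, if X i j ω = 1 then 1 else 0 := by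
      funext ω
      rw [hR]
      exact Finset.card_filter _ _
    rw [hRsum]
    apply Finset.measurable_sum
    intro j _
    exact Measurable.ite (hsetM i j) measurable_const measurable_const
  have hRmeas : ∀ i, Measurable (R i) := fun i => (hRM i).mono (hMle i) le_rfl
  have hfexpM : ∀ i, Measurable[M i] (fun ω => fexp (R i ω)) := by
    intro i
    exact Measurable.comp (measurable_from_top : Measurable fexp) (hRM i)
  have hfexpmeas : ∀ i, Measurable (fun ω => fexp (R i ω)) :=
    fun i => ((hfexpM i).mono (hMle i) le_rfl)
  -- independence of row σ-algebras
  have hIndepM : ∀ (s : Finset (Fin n)) (i : Fin n), i ∉ s →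
      Indep (M i) (⨆ i' ∈ s, M i') ℙ := by
    intro s i hi
    have hcomap_le : ∀ q : Fin n × Fin n,
        MeasurableSpace.comap (fun ω => X q.1 q.2 ω) inferInstance ≤
          (inferInstance : MeasurableSpace Ω) :=
      fun q => (hmeas q.1 q.2).comap_le
    have hii := hindep.iIndep
    have hdisj : Disjoint {q : Fin n × Fin n | q.1 = i} {q : Fin n × Fin n | q.1 ∈ s} := by
      rw [Set.disjoint_left]
      rintro q hq1 hq2
      exact hi (hq1 ▸ hq2)
    have big := indep_iSup_of_disjoint hcomap_le hii hdisj
    apply indep_of_indep_of_le_left (indep_of_indep_of_le_right big ?_) ?_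
    · -- ⨆ i' ∈ s, M i' ≤ ⨆ q ∈ {q | q.1 ∈ s}, comap ...
      apply iSup₂_le
      intro i' hi'
      rw [hM]
      apply iSup_le
      intro j
      exact le_iSup₂ (f := fun (q : Fin n × Fin n) (_ : q ∈ {q : Fin n × Fin n | q.1 ∈ s}) =>
        MeasurableSpace.comap (fun ω => X q.1 q.2 ω) inferInstance) (i', j) hi'
    · -- M i ≤ ⨆ q ∈ {q | q.1 = i}, comap ...
      rw [hM]
      apply iSup_le
      intro j
      exact le_iSup₂ (f := fun (q : Fin n × Fin n) (_ : q ∈ {q : Fin n × Fin n | q.1 = i}) =>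
        MeasurableSpace.comap (fun ω => X q.1 q.2 ω) inferInstance) (i, j) rfl
  -- product formula
  have hprod : ∀ s : Finset (Fin n),
      ∫⁻ ω, ∏ i ∈ s, fexp (R i ω) ∂ℙ = ∏ i ∈ s, ∫⁻ ω, fexp (R i ω) ∂ℙ := by
    intro s
    induction s using Finset.induction_on with
    | empty => simp
    | @insert i s hi IH =>
      have heq : (fun ω => ∏ i' ∈ insert i s, fexp (R i' ω))
          = fun ω => fexp (R i ω) * ∏ i' ∈ s, fexp (R i' ω) := by
        funext ω
        exact Finset.prod_insert hi
      rw [heq, Finset.prod_insert hi, ← IH]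
      have hmg : Measurable[⨆ i' ∈ s, M i'] (fun ω => ∏ i' ∈ s, fexp (R i' ω)) := by
        apply Finset.measurable_prod
        intro i' hi'
        exact (hfexpM i').mono (le_iSup₂ (f := fun i'' (_ : i'' ∈ s) => M i'') i' hi') le_rfl
      exact lintegral_mul_eq_lintegral_mul_lintegral_of_independent_measurableSpace
        (hMle i) (iSup₂_le fun i' _ => hMle i') (hIndepM s i hi) (hfexpM i) hmg
  -- single-row moment bound
  have hrow : ∀ i, ∫⁻ ω, fexp (R i ω) ∂ℙ ≤ ENNReal.ofReal (1 + ε/4) := by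
    intro i
    -- tail probability bound
    have htail : ∀ k : ℕ, ℙ {ω | k ≤ R i ω} ≤ (n.choose k) * ENNReal.ofReal p ^ k := by
      intro k
      have hsub : {ω | k ≤ R i ω} ⊆
          ⋃ A ∈ Finset.powersetCard k (univ : Finset (Fin n)),
            ⋂ j ∈ A, {ω | X i j ω = 1} := by
        intro ω hω
        obtain ⟨A, hA, hAcard⟩ := Finset.exists_subset_card_eq hω
        refine Set.mem_iUnion₂.2 ⟨A, ?_, ?_⟩
        · exact Finset.mem_powersetCard.2 ⟨Finset.subset_univ A, hAcard⟩
        · refine Set.mem_iInter₂.2 fun j hj => ?_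
          have := hA hj
          simpa using (Finset.mem_filter.1 this).2
      have hinter : ∀ A : Finset (Fin n),
          ℙ (⋂ j ∈ A, {ω | X i j ω = 1}) = ENNReal.ofReal p ^ A.card := by
        intro A
        have := hindep.measure_inter_preimage_eq_mul
          (S := A.map ⟨fun j => ((i, j) : Fin n × Fin n), Prod.mk_right_injective i⟩)
          (sets := fun _ => ({1} : Set ℝ))
          (fun q _ => MeasurableSet.singleton 1)
        have hleft : (⋂ q ∈ A.map ⟨fun j => ((i, j) : Fin n × Fin n), Prod.mk_right_injective i⟩,
            (fun ω => X q.1 q.2 ω) ⁻¹' ({1} : Set ℝ)) = ⋂ j ∈ A, {ω | X i j ω = 1} := by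
          ext ω
          simp [Set.mem_iInter, Finset.mem_map, Set.mem_preimage]
        rw [hleft] at this
        rw [this, Finset.prod_map]
        simp only [Function.Embedding.coeFn_mk]
        calc ∏ j ∈ A, ℙ ((fun ω => X i j ω) ⁻¹' ({1} : Set ℝ))
            = ∏ j ∈ A, ENNReal.ofReal p := by
              apply Finset.prod_congr rfl
              intro j _
              rw [show (fun ω => X i j ω) ⁻¹' ({1} : Set ℝ) = {ω | X i j ω = 1} by
                ext ω; simp]
              exact hber i j
          _ = ENNReal.ofReal p ^ A.card := by rw [Finset.prod_const]
      calc ℙ {ω | k ≤ R i ω} ≤ ℙ (⋃ A ∈ Finset.powersetCard k (univ : Finset (Fin n)),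
            ⋂ j ∈ A, {ω | X i j ω = 1}) := measure_mono hsub
        _ ≤ ∑ A ∈ Finset.powersetCard k (univ : Finset (Fin n)),
            ℙ (⋂ j ∈ A, {ω | X i j ω = 1}) := measure_biUnion_finset_le _ _
        _ = ∑ A ∈ Finset.powersetCard k (univ : Finset (Fin n)), ENNReal.ofReal p ^ k := by
            apply Finset.sum_congr rfl
            intro A hA
            rw [hinter A, (Finset.mem_powersetCard.1 hA).2]
        _ = (n.choose k) * ENNReal.ofReal p ^ k := by
            rw [Finset.sum_const, Finset.card_powersetCard, Finset.card_univ, Fintype.card_fin,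
              nsmul_eq_mul]
    have hRn : ∀ ω, R i ω ≤ n := by
      intro ω
      rw [hR]
      calc (univ.filter fun j => X i j ω = 1).card ≤ (univ : Finset (Fin n)).card :=
            Finset.card_filter_le _ _
        _ = n := by simp
    have hsetk : ∀ k : ℕ, MeasurableSet {ω | k ≤ R i ω} := by
      intro k
      exact (hRmeas i) (measurableSet_Ici : MeasurableSet (Set.Ici k))
    have hpoint : ∀ ω, fexp (R i ω) ≤ 1 + ∑ k ∈ Finset.Icc k₀ n,
        Set.indicator {ω' | k ≤ R i ω'} (fun _ => ENNReal.ofReal (Real.exp k)) ω := by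
      intro ω
      by_cases h : k₀ ≤ R i ω
      · have hmem : R i ω ∈ Finset.Icc k₀ n := Finset.mem_Icc.2 ⟨h, hRn ω⟩
        have hterm : ENNReal.ofReal (Real.exp (R i ω)) ≤ ∑ k ∈ Finset.Icc k₀ n,
            Set.indicator {ω' | k ≤ R i ω'} (fun _ => ENNReal.ofReal (Real.exp k)) ω := by
          have heval : Set.indicator {ω' | R i ω ≤ R i ω'}
              (fun _ => ENNReal.ofReal (Real.exp (R i ω))) ω
              = ENNReal.ofReal (Real.exp (R i ω)) := by
            exact Set.indicator_of_mem (show ω ∈ {ω' | R i ω ≤ R i ω'} from Set.mem_setOf_eq ▸ le_refl (R i ω))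
              (fun _ => ENNReal.ofReal (Real.exp (R i ω)))
          calc ENNReal.ofReal (Real.exp (R i ω))
              = Set.indicator {ω' | R i ω ≤ R i ω'}
                  (fun _ => ENNReal.ofReal (Real.exp (R i ω))) ω := heval.symm
            _ ≤ ∑ k ∈ Finset.Icc k₀ n,
                Set.indicator {ω' | k ≤ R i ω'} (fun _ => ENNReal.ofReal (Real.exp k)) ω :=
              Finset.single_le_sum (f := fun k => Set.indicator {ω' | k ≤ R i ω'}
                (fun _ => ENNReal.ofReal (Real.exp k)) ω) (fun k _ => zero_le) hmem
        calc fexp (R i ω) = ENNReal.ofReal (Real.exp (R i ω)) := by rw [hfexp]; simp [h]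
          _ ≤ 1 + _ := le_add_self.trans (by rw []; exact add_le_add_right hterm 1)
      · have : fexp (R i ω) = 1 := by rw [hfexp]; simp [h]
        rw [this]
        exact le_self_add
    calc ∫⁻ ω, fexp (R i ω) ∂ℙ
        ≤ ∫⁻ ω, (1 + ∑ k ∈ Finset.Icc k₀ n,
            Set.indicator {ω' | k ≤ R i ω'} (fun _ => ENNReal.ofReal (Real.exp k)) ω) ∂ℙ :=
          lintegral_mono hpoint
      _ = 1 + ∑ k ∈ Finset.Icc k₀ n, ENNReal.ofReal (Real.exp k) * ℙ {ω | k ≤ R i ω} := by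
          rw [lintegral_add_left measurable_const]
          rw [lintegral_finset_sum _ (fun k _ => measurable_const.indicator (hsetk k))]
          simp only [lintegral_const, measure_univ, mul_one]
          congr 1
          apply Finset.sum_congr rfl
          intro k _
          rw [lintegral_indicator_const (hsetk k)]
      _ ≤ 1 + ∑ k ∈ Finset.Icc k₀ n, ENNReal.ofReal (Real.exp k) *
            ((n.choose k) * ENNReal.ofReal p ^ k) := by
          apply add_le_add_right
          apply Finset.sum_le_sum
          intro k _
          exact mul_le_mul_right (htail k) _
      _ = ENNReal.ofReal (1 + ∑ k ∈ Finset.Icc k₀ n, Real.exp k * (n.choose k) * p ^ k) := by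
          rw [ENNReal.ofReal_add (by norm_num) (Finset.sum_nonneg (fun k _ => by positivity))]
          rw [ENNReal.ofReal_one]
          congr 1
          rw [ENNReal.ofReal_sum_of_nonneg (fun k _ => by positivity)]
          apply Finset.sum_congr rfl
          intro k _
          rw [ENNReal.ofReal_mul (by positivity), ENNReal.ofReal_mul (Real.exp_pos _).le,
            ENNReal.ofReal_natCast, ENNReal.ofReal_pow hp0]
          ring
      _ ≤ ENNReal.ofReal (1 + ε/4) := by
          apply ENNReal.ofReal_le_ofReal
          have := key_numeric n p ε hp0 hε0 hε1
          rw [← hk₀] at this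
          linarith
  -- assembly
  set F : Ω → ℝ≥0∞ := fun ω => ∏ i, fexp (R i ω) with hF
  have hFmeas : Measurable F := by
    rw [hF]
    exact Finset.measurable_prod univ (fun i _ => hfexpmeas i)
  have hsub : {ω | ε*n/2 < ((∑ i, if k₀ ≤ R i ω then R i ω else 0 : ℕ) : ℝ)}
      ⊆ {ω | ENNReal.ofReal (Real.exp (ε*n/2)) ≤ F ω} := by
    intro ω hω
    have hω' : ε*n/2 < ((∑ i, if k₀ ≤ R i ω then R i ω else 0 : ℕ) : ℝ) := hω
    have hFval : F ω = ENNReal.ofReal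
        (Real.exp (∑ i, (if k₀ ≤ R i ω then (R i ω : ℝ) else 0))) := by
      rw [hF, Real.exp_sum, ENNReal.ofReal_prod_of_nonneg (fun i _ => (Real.exp_pos _).le)]
      apply Finset.prod_congr rfl
      intro i _
      rw [hfexp]
      by_cases h : k₀ ≤ R i ω
      · simp [h]
      · simp [h, Real.exp_zero]
    have hcast : ((∑ i, if k₀ ≤ R i ω then R i ω else 0 : ℕ) : ℝ)
        = ∑ i, (if k₀ ≤ R i ω then (R i ω : ℝ) else 0) := by
      rw [Nat.cast_sum]
      apply Finset.sum_congr rfl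
      intro i _
      split <;> simp
    show ENNReal.ofReal (Real.exp (ε*n/2)) ≤ F ω
    rw [hFval]
    apply ENNReal.ofReal_le_ofReal
    apply Real.exp_le_exp.2
    rw [← hcast]
    linarith
  have hexppos : (0:ℝ≥0∞) < ENNReal.ofReal (Real.exp (ε*n/2)) :=
    ENNReal.ofReal_pos.2 (Real.exp_pos _)
  calc ℙ {ω | ε*n/2 < ((∑ i, if k₀ ≤ R i ω then R i ω else 0 : ℕ) : ℝ)}
      ≤ ℙ {ω | ENNReal.ofReal (Real.exp (ε*n/2)) ≤ F ω} := measure_mono hsub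
    _ ≤ (∫⁻ ω, F ω ∂ℙ) / ENNReal.ofReal (Real.exp (ε*n/2)) :=
        meas_ge_le_lintegral_div hFmeas.aemeasurable hexppos.ne' ENNReal.ofReal_ne_top
    _ ≤ ENNReal.ofReal (Real.exp (ε*n/4)) / ENNReal.ofReal (Real.exp (ε*n/2)) := by
        apply ENNReal.div_le_div_right
        have h1 : ∫⁻ ω, F ω ∂ℙ = ∏ i, ∫⁻ ω, fexp (R i ω) ∂ℙ := hprod univ
        rw [h1]
        calc ∏ i, ∫⁻ ω, fexp (R i ω) ∂ℙ ≤ ∏ _i : Fin n, ENNReal.ofReal (1 + ε/4) :=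
              Finset.prod_le_prod' (fun i _ => hrow i)
          _ = ENNReal.ofReal (1 + ε/4) ^ n := by rw [Finset.prod_const, Finset.card_univ,
              Fintype.card_fin]
          _ ≤ ENNReal.ofReal (Real.exp (ε*n/4)) := by
              rw [← ENNReal.ofReal_pow (by positivity)]
              apply ENNReal.ofReal_le_ofReal
              calc (1 + ε/4) ^ n ≤ Real.exp (ε/4) ^ n := by
                    apply pow_le_pow_left₀ (by positivity)
                    have := Real.add_one_le_exp (ε/4)
                    linarith
                _ = Real.exp (n * (ε/4)) := (Real.exp_nat_mul _ n).symm
                _ = Real.exp (ε*n/4) := by congr 1; ring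
    _ = ENNReal.ofReal (Real.exp (-(ε*n)/4)) := by
        rw [← ENNReal.ofReal_div_of_pos (Real.exp_pos _), ← Real.exp_sub]
        congr 1
        ring



lemma iIndepFun_swap {n : ℕ} {Ω : Type} [MeasureSpace Ω]
    (f : Fin n × Fin n → Ω → ℝ)
    (h : iIndepFun f ℙ) :
    iIndepFun (fun q : Fin n × Fin n => f q.swap) ℙ := by
  rw [iIndepFun_iff_measure_inter_preimage_eq_mul] at h ⊢
  intro S sets H
  have key := h (S.map (Equiv.prodComm (Fin n) (Fin n)).toEmbedding)
    (sets := fun q : Fin n × Fin n => sets q.swap) ?_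
  · have hleft : (⋂ q ∈ S.map (Equiv.prodComm (Fin n) (Fin n)).toEmbedding,
        f q ⁻¹' sets q.swap) = ⋂ q ∈ S, (fun ω => f q.swap ω) ⁻¹' sets q := by
      ext ω
      simp only [Set.mem_iInter, Finset.mem_map, Equiv.coe_toEmbedding, Equiv.prodComm_apply]
      constructor
      · intro hh q hq
        have := hh q.swap ⟨q, hq, rfl⟩
        simpa using this
      · rintro hh q ⟨q₀, hq₀, rfl⟩
        simpa using hh q₀ hq₀
    have hright : ∏ q ∈ S.map (Equiv.prodComm (Fin n) (Fin n)).toEmbedding,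
        ℙ (f q ⁻¹' sets q.swap) = ∏ q ∈ S, ℙ ((fun ω => f q.swap ω) ⁻¹' sets q) := by
      rw [Finset.prod_map]
      apply Finset.prod_congr rfl
      intro q _
      simp
    rw [hleft, hright] at key
    exact key
  · intro q hq
    obtain ⟨q₀, hq₀, rfl⟩ := Finset.mem_map.1 hq
    simpa using H q₀ hq₀


/-- The matrix obtained from `B` by zeroing out all entries in the `I × J` submatrix. -/
noncomputable def zeroSub {n : ℕ} (B : Matrix (Fin n) (Fin n) ℝ) (I J : Finset (Fin n)) :
    Matrix (Fin n) (Fin n) ℝ :=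
  Matrix.of fun i j => if i ∈ I ∧ j ∈ J then 0 else B i j

lemma deterministic_choice {n : ℕ} (m : ℝ) (hm0 : 0 ≤ m) (A : Matrix (Fin n) (Fin n) ℝ)
    (t : ℝ)
    (hWr : ((∑ i, if ⌊m⌋₊ + 1 ≤ (univ.filter fun j => A i j = 1).card
        then (univ.filter fun j => A i j = 1).card else 0 : ℕ) : ℝ) ≤ t/2)
    (hWc : ((∑ j, if ⌊m⌋₊ + 1 ≤ (univ.filter fun i => A i j = 1).card
        then (univ.filter fun i => A i j = 1).card else 0 : ℕ) : ℝ) ≤ t/2) :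
    ∃ I J : Finset (Fin n), (I.card : ℝ) ≤ t ∧ (J.card : ℝ) ≤ t ∧
      (∀ i, ((univ.filter fun j => zeroSub A I J i j = 1).card : ℝ) ≤ m) ∧
      (∀ j, ((univ.filter fun i => zeroSub A I J i j = 1).card : ℝ) ≤ m) := by
  classical
  set k₀ : ℕ := ⌊m⌋₊ + 1 with hk₀
  set rA : Fin n → ℕ := fun i => (univ.filter fun j => A i j = 1).card with hrA
  set cA : Fin n → ℕ := fun j => (univ.filter fun i => A i j = 1).card with hcA
  set I : Finset (Fin n) := univ.filter (fun i => k₀ ≤ rA i ∨ ∃ j, k₀ ≤ cA j ∧ A i j = 1) with hI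
  set J : Finset (Fin n) := univ.filter (fun j => k₀ ≤ cA j ∨ ∃ i, k₀ ≤ rA i ∧ A i j = 1) with hJ
  -- generic counting bound
  have cardbound : ∀ (r c : Fin n → ℕ) (M : Matrix (Fin n) (Fin n) ℝ),
      (∀ i, r i = (univ.filter fun j => M i j = 1).card) →
      (∀ j, c j = (univ.filter fun i => M i j = 1).card) →
      (univ.filter (fun i => k₀ ≤ r i ∨ ∃ j, k₀ ≤ c j ∧ M i j = 1)).card ≤
        (∑ i, if k₀ ≤ r i then r i else 0) + (∑ j, if k₀ ≤ c j then c j else 0) := by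
    intro r c M hr hc
    have hsplit : univ.filter (fun i => k₀ ≤ r i ∨ ∃ j, k₀ ≤ c j ∧ M i j = 1) ⊆
        univ.filter (fun i => k₀ ≤ r i) ∪
          univ.filter (fun i => ∃ j, k₀ ≤ c j ∧ M i j = 1) := by
      intro i hi
      rw [Finset.mem_filter] at hi
      rw [Finset.mem_union, Finset.mem_filter, Finset.mem_filter]
      tauto
    have h1 : (univ.filter (fun i => k₀ ≤ r i)).card ≤ ∑ i, if k₀ ≤ r i then r i else 0 := by
      rw [Finset.card_filter]
      apply Finset.sum_le_sum
      intro i _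
      by_cases h : k₀ ≤ r i
      · simp only [if_pos h]
        omega
      · simp [h]
    have h2 : (univ.filter (fun i => ∃ j, k₀ ≤ c j ∧ M i j = 1)).card ≤
        ∑ j, if k₀ ≤ c j then c j else 0 := by
      have hsub2 : univ.filter (fun i => ∃ j, k₀ ≤ c j ∧ M i j = 1) ⊆
          (univ.filter fun j => k₀ ≤ c j).biUnion
            (fun j => univ.filter fun i => M i j = 1) := by
        intro i hi
        rw [Finset.mem_filter] at hi
        obtain ⟨-, j, hj1, hj2⟩ := hi
        rw [Finset.mem_biUnion]
        exact ⟨j, Finset.mem_filter.2 ⟨Finset.mem_univ _, hj1⟩,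
          Finset.mem_filter.2 ⟨Finset.mem_univ _, hj2⟩⟩
      calc (univ.filter (fun i => ∃ j, k₀ ≤ c j ∧ M i j = 1)).card
          ≤ ((univ.filter fun j => k₀ ≤ c j).biUnion
              (fun j => univ.filter fun i => M i j = 1)).card := Finset.card_le_card hsub2
        _ ≤ ∑ j ∈ univ.filter fun j => k₀ ≤ c j, (univ.filter fun i => M i j = 1).card :=
            Finset.card_biUnion_le
        _ = ∑ j ∈ univ.filter fun j => k₀ ≤ c j, c j := by
            apply Finset.sum_congr rfl
            intro j _
            exact (hc j).symm
        _ = ∑ j, if k₀ ≤ c j then c j else 0 := (Finset.sum_filter _ _)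
    calc (univ.filter (fun i => k₀ ≤ r i ∨ ∃ j, k₀ ≤ c j ∧ M i j = 1)).card
        ≤ (univ.filter (fun i => k₀ ≤ r i) ∪
            univ.filter (fun i => ∃ j, k₀ ≤ c j ∧ M i j = 1)).card := Finset.card_le_card hsplit
      _ ≤ _ := Finset.card_union_le _ _
      _ ≤ _ := Nat.add_le_add h1 h2
  have hIcard : (I.card : ℝ) ≤ t := by
    have := cardbound rA cA A (fun i => rfl) (fun j => rfl)
    rw [← hI] at this
    have hcast : (I.card : ℝ) ≤ ((∑ i, if k₀ ≤ rA i then rA i else 0 : ℕ) : ℝ)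
        + ((∑ j, if k₀ ≤ cA j then cA j else 0 : ℕ) : ℝ) := by
      exact_mod_cast this
    linarith
  have hJcard : (J.card : ℝ) ≤ t := by
    have := cardbound cA rA A.transpose (fun j => rfl) (fun i => rfl)
    have hJeq : univ.filter (fun j => k₀ ≤ cA j ∨ ∃ i, k₀ ≤ rA i ∧ A.transpose j i = 1) = J := by
      rw [hJ]
      apply Finset.filter_congr
      intro j _
      simp [Matrix.transpose_apply]
    rw [hJeq] at this
    · have hcast : (J.card : ℝ) ≤ ((∑ j, if k₀ ≤ cA j then cA j else 0 : ℕ) : ℝ)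
          + ((∑ i, if k₀ ≤ rA i then rA i else 0 : ℕ) : ℝ) := by
        exact_mod_cast this
      linarith
  refine ⟨I, J, hIcard, hJcard, ?_, ?_⟩
  · -- rows
    intro i
    by_cases hh : k₀ ≤ rA i
    · have hiI : i ∈ I := by
        rw [hI, Finset.mem_filter]
        exact ⟨Finset.mem_univ _, Or.inl hh⟩
      have hempty : (univ.filter fun j => zeroSub A I J i j = 1) = ∅ := by
        rw [Finset.eq_empty_iff_forall_notMem]
        intro j hj
        rw [Finset.mem_filter] at hj
        have h1 := hj.2
        by_cases hjJ : j ∈ J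
        · rw [zeroSub, Matrix.of_apply, if_pos ⟨hiI, hjJ⟩] at h1
          norm_num at h1
        · rw [zeroSub, Matrix.of_apply, if_neg (fun hc' => hjJ hc'.2)] at h1
          apply hjJ
          rw [hJ, Finset.mem_filter]
          exact ⟨Finset.mem_univ _, Or.inr ⟨i, hh, h1⟩⟩
      rw [hempty]
      simpa using hm0
    · have hsub : (univ.filter fun j => zeroSub A I J i j = 1) ⊆
          (univ.filter fun j => A i j = 1) := by
        intro j hj
        rw [Finset.mem_filter] at hj ⊢
        refine ⟨Finset.mem_univ _, ?_⟩
        have h1 := hj.2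
        rw [zeroSub, Matrix.of_apply] at h1
        by_cases hc' : i ∈ I ∧ j ∈ J
        · rw [if_pos hc'] at h1; norm_num at h1
        · rwa [if_neg hc'] at h1
      have h2 : rA i ≤ ⌊m⌋₊ := by omega
      calc ((univ.filter fun j => zeroSub A I J i j = 1).card : ℝ)
          ≤ (rA i : ℝ) := by exact_mod_cast Finset.card_le_card hsub
        _ ≤ (⌊m⌋₊ : ℝ) := by exact_mod_cast h2
        _ ≤ m := Nat.floor_le hm0
  · -- columns
    intro j
    by_cases hh : k₀ ≤ cA j
    · have hjJ : j ∈ J := by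
        rw [hJ, Finset.mem_filter]
        exact ⟨Finset.mem_univ _, Or.inl hh⟩
      have hempty : (univ.filter fun i => zeroSub A I J i j = 1) = ∅ := by
        rw [Finset.eq_empty_iff_forall_notMem]
        intro i hi
        rw [Finset.mem_filter] at hi
        have h1 := hi.2
        by_cases hiI : i ∈ I
        · rw [zeroSub, Matrix.of_apply, if_pos ⟨hiI, hjJ⟩] at h1
          norm_num at h1
        · rw [zeroSub, Matrix.of_apply, if_neg (fun hc' => hiI hc'.1)] at h1
          apply hiI
          rw [hI, Finset.mem_filter]
          exact ⟨Finset.mem_univ _, Or.inr ⟨j, hh, h1⟩⟩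
      rw [hempty]
      simpa using hm0
    · have hsub : (univ.filter fun i => zeroSub A I J i j = 1) ⊆
          (univ.filter fun i => A i j = 1) := by
        intro i hi
        rw [Finset.mem_filter] at hi ⊢
        refine ⟨Finset.mem_univ _, ?_⟩
        have h1 := hi.2
        rw [zeroSub, Matrix.of_apply] at h1
        by_cases hc' : i ∈ I ∧ j ∈ J
        · rw [if_pos hc'] at h1; norm_num at h1
        · rwa [if_neg hc'] at h1
      have h2 : cA j ≤ ⌊m⌋₊ := by omega
      calc ((univ.filter fun i => zeroSub A I J i j = 1).card : ℝ)
          ≤ (cA j : ℝ) := by exact_mod_cast Finset.card_le_card hsub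
        _ ≤ (⌊m⌋₊ : ℝ) := by exact_mod_cast h2
        _ ≤ m := Nat.floor_le hm0


open Classical in
/-- **Bernoulli random matrix, regularization.** Let `B` be an `n × n` random matrix with
independent Bernoulli(`p`) entries and `ε ∈ (0,1]`. Then with probability at least
`1 - 2 exp(-εn/4)` one can zero out an `εn × εn` submatrix of `B` so that every row and every
column of the resulting matrix `B̃` contains at most `21pn + 4 ln ε⁻¹` ones. -/
theorem bernoulli_regularization
    (n : ℕ) (Ω : Type) [MeasureSpace Ω] [IsProbabilityMeasure (ℙ : Measure Ω)]
    (p : ℝ) (hp0 : 0 ≤ p) (hp1 : p ≤ 1)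
    (B : Ω → Matrix (Fin n) (Fin n) ℝ)
    (hmeas : ∀ i j, Measurable fun ω => B ω i j)
    (hindep : iIndepFun
      (fun q : Fin n × Fin n => fun ω => B ω q.1 q.2) ℙ)
    (h01 : ∀ i j, ∀ᵐ ω ∂ℙ, B ω i j = 0 ∨ B ω i j = 1)
    (hber : ∀ i j, ℙ {ω | B ω i j = 1} = ENNReal.ofReal p)
    (ε : ℝ) (hε0 : 0 < ε) (hε1 : ε ≤ 1) :
    ENNReal.ofReal (1 - 2 * Real.exp (-(ε * n) / 4)) ≤
      ℙ {ω | ∃ I J : Finset (Fin n), (I.card : ℝ) ≤ ε * n ∧ (J.card : ℝ) ≤ ε * n ∧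
        (∀ i, ((Finset.univ.filter fun j => zeroSub (B ω) I J i j = 1).card : ℝ) ≤
          21 * p * n + 4 * Real.log ε⁻¹) ∧
        (∀ j, ((Finset.univ.filter fun i => zeroSub (B ω) I J i j = 1).card : ℝ) ≤
          21 * p * n + 4 * Real.log ε⁻¹)} := by
  have hL : 0 ≤ Real.log ε⁻¹ := Real.log_nonneg ((one_le_inv₀ hε0).2 hε1)
  have hm0 : (0:ℝ) ≤ 21*p*↑n + 4*Real.log ε⁻¹ := by positivity
  have hr := tail_bound n Ω p hp0 hp1 (fun i j ω => B ω i j) hmeas hindep hber ε hε0 hε1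
  have hc := tail_bound n Ω p hp0 hp1 (fun i j ω => B ω j i) (fun i j => hmeas j i)
      (iIndepFun_swap (fun q ω => B ω q.1 q.2) hindep) (fun i j => hber j i) ε hε0 hε1
  set Br : Set Ω := {ω | ε*↑n/2 < ((∑ i, if ⌊21*p*↑n + 4*Real.log ε⁻¹⌋₊ + 1 ≤
          (Finset.univ.filter fun j => B ω i j = 1).card
        then (Finset.univ.filter fun j => B ω i j = 1).card else 0 : ℕ) : ℝ)} with hBr
  set Bc : Set Ω := {ω | ε*↑n/2 < ((∑ j, if ⌊21*p*↑n + 4*Real.log ε⁻¹⌋₊ + 1 ≤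
          (Finset.univ.filter fun i => B ω i j = 1).card
        then (Finset.univ.filter fun i => B ω i j = 1).card else 0 : ℕ) : ℝ)} with hBc
  have hrB : ℙ Br ≤ ENNReal.ofReal (Real.exp (-(ε*↑n)/4)) := hr
  have hcB : ℙ Bc ≤ ENNReal.ofReal (Real.exp (-(ε*↑n)/4)) := hc
  set E : Set Ω := {ω | ∃ I J : Finset (Fin n), (I.card : ℝ) ≤ ε * n ∧ (J.card : ℝ) ≤ ε * n ∧
        (∀ i, ((Finset.univ.filter fun j => zeroSub (B ω) I J i j = 1).card : ℝ) ≤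
          21 * p * n + 4 * Real.log ε⁻¹) ∧
        (∀ j, ((Finset.univ.filter fun i => zeroSub (B ω) I J i j = 1).card : ℝ) ≤
          21 * p * n + 4 * Real.log ε⁻¹)} with hE
  have hcover : (Set.univ : Set Ω) ⊆ E ∪ (Br ∪ Bc) := by
    intro ω _
    by_cases hω1 : ω ∈ Br
    · exact Or.inr (Or.inl hω1)
    by_cases hω2 : ω ∈ Bc
    · exact Or.inr (Or.inr hω2)
    left
    have hWr : ((∑ i, if ⌊21*p*↑n + 4*Real.log ε⁻¹⌋₊ + 1 ≤
          (Finset.univ.filter fun j => B ω i j = 1).card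
        then (Finset.univ.filter fun j => B ω i j = 1).card else 0 : ℕ) : ℝ) ≤ ε*↑n/2 :=
      not_lt.1 hω1
    have hWc : ((∑ j, if ⌊21*p*↑n + 4*Real.log ε⁻¹⌋₊ + 1 ≤
          (Finset.univ.filter fun i => B ω i j = 1).card
        then (Finset.univ.filter fun i => B ω i j = 1).card else 0 : ℕ) : ℝ) ≤ ε*↑n/2 :=
      not_lt.1 hω2
    obtain ⟨I, J, hI, hJ, hrow, hcol⟩ :=
      deterministic_choice (21*p*↑n + 4*Real.log ε⁻¹) hm0 (B ω) (ε*↑n) hWr hWc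
    exact ⟨I, J, hI, hJ, hrow, hcol⟩
  have hone : (1:ℝ≥0∞) ≤ ℙ E + (ℙ Br + ℙ Bc) := by
    calc (1:ℝ≥0∞) = ℙ (Set.univ : Set Ω) := (measure_univ).symm
      _ ≤ ℙ (E ∪ (Br ∪ Bc)) := measure_mono hcover
      _ ≤ ℙ E + ℙ (Br ∪ Bc) := measure_union_le _ _
      _ ≤ ℙ E + (ℙ Br + ℙ Bc) := add_le_add_right (measure_union_le _ _) _
  have h2 : ℙ Br + ℙ Bc ≤ ENNReal.ofReal (2 * Real.exp (-(ε*↑n)/4)) := by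
    rw [ENNReal.ofReal_mul (by norm_num : (0:ℝ) ≤ 2)]
    calc ℙ Br + ℙ Bc ≤ ENNReal.ofReal (Real.exp (-(ε*↑n)/4))
          + ENNReal.ofReal (Real.exp (-(ε*↑n)/4)) := add_le_add hrB hcB
      _ = ENNReal.ofReal 2 * ENNReal.ofReal (Real.exp (-(ε*↑n)/4)) := by
          rw [← two_mul]
          congr 1
          rw [ENNReal.ofReal_ofNat]
  rw [ENNReal.ofReal_sub _ (by positivity), ENNReal.ofReal_one]
  rw [tsub_le_iff_right]
  calc (1:ℝ≥0∞) ≤ ℙ E + (ℙ Br + ℙ Bc) := hone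
    _ ≤ ℙ E + ENNReal.ofReal (2 * Real.exp (-(ε * ↑n) / 4)) := add_le_add_right h2 _
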